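/- Let a>0, b>0 and α∈(1,2). There exists ε₀ ∈ (0, π/2) such that for every x>0 and every t>0, lim_{K→∞} ∫_{π/2}^{π/2+ε₀} i K e^{iθ} · e^{x K e^{iθ}} · exp( −a ∫₀^t v_s(K e^{iθ}) ds ) dθ = 0, i.e., the contour integral of z ↦ e^{xz} exp(−a ∫₀^t v_s(z) ds) over the circular arc { K e^{iθ} : θ ∈ [π/2, π/2+ε₀] } tends to 0 as K → ∞. -/

import Mathlib

open Real Filter

/-- The complex extension of the function `v_s(z)`, defined via principal-branch
complex powers (with the convention `0 ^ β = 0`). -/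
noncomputable def vC (b α : ℝ) (s : ℝ) (z : ℂ) : ℂ :=
  ((1 / ((α : ℂ) * (b : ℂ)) + z ^ ((1 : ℂ) - (α : ℂ))) * Complex.exp ((b * (α - 1) * s : ℝ) : ℂ)
      - 1 / ((α : ℂ) * (b : ℂ))) ^ ((1 : ℂ) / (1 - (α : ℂ)))

namespace Stmt10Aux

lemma cpow_real_re (w : ℂ) (hw : w ≠ 0) (γ : ℝ) :
    (w ^ (γ : ℂ)).re = ‖w‖ ^ γ * Real.cos (γ * w.arg) := by
  rw [Complex.cpow_def_of_ne_zero hw, Complex.exp_re]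
  have h1 : (Complex.log w * γ).re = Real.log (‖w‖) * γ := by
    simp [Complex.mul_re, Complex.log_re, Complex.log_im]
  have h2 : (Complex.log w * γ).im = γ * w.arg := by
    simp [Complex.mul_im, Complex.log_re, Complex.log_im]; ring
  rw [h1, h2, Real.rpow_def_of_pos (norm_pos_iff.mpr hw)]

lemma cos_arg_ge (c E r : ℝ) (u : ℂ) (hc : 0 ≤ c) (hE : 0 < E) (hr : 0 < r)
    (hu : ‖u‖ = r) (him : u.im < 0) :
    u.re / r ≤ Real.cos (Complex.arg ((c : ℂ) + (E : ℂ) * u)) := by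
  set B := (c : ℂ) + (E : ℂ) * u with hBdef
  have hBim : B.im = E * u.im := by simp [hBdef]
  have hBim0 : B.im < 0 := by rw [hBim]; exact mul_neg_of_pos_of_neg hE him
  have hB0 : B ≠ 0 := fun h => by rw [h] at hBim0; simp at hBim0
  have hBre : B.re = c + E * u.re := by simp [hBdef]
  have habs_pos : 0 < ‖B‖ := norm_pos_iff.mpr hB0
  rw [Complex.cos_arg hB0]
  rw [div_le_div_iff₀ hr habs_pos]
  have hBle : ‖B‖ ≤ c + E * r := by
    calc ‖B‖ ≤ ‖(c : ℂ)‖ + ‖((E : ℂ) * u)‖ := norm_add_le _ _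
    _ = c + E * r := by rw [norm_mul]; simp [Complex.norm_real, abs_of_nonneg hc, abs_of_pos hE, hu]
  have hBge : E * r - c ≤ ‖B‖ := by
    have := norm_sub_norm_le ((E : ℂ) * u) (-(c : ℂ))
    simp only [sub_neg_eq_add, norm_neg] at this
    calc E * r - c = ‖((E : ℂ) * u)‖ - ‖((c : ℂ))‖ := by
          rw [norm_mul]; simp [Complex.norm_real, abs_of_nonneg hc, abs_of_pos hE, hu]
    _ ≤ ‖((E : ℂ) * u + (c : ℂ))‖ := this
    _ = ‖B‖ := by rw [hBdef, add_comm]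
  have hre1 : u.re ≤ r := hu ▸ Complex.re_le_norm u
  have hre2 : -r ≤ u.re := by
    have := Complex.abs_re_le_norm u
    rw [hu] at this
    linarith [neg_abs_le u.re]
  rw [hBre]
  rcases le_or_gt 0 u.re with h | h
  · nlinarith
  · nlinarith

lemma abs_arg_le_of_cos_ge {w : ℂ} {ψ : ℝ} (hψ0 : 0 ≤ ψ) (hψπ : ψ ≤ π)
    (h : Real.cos ψ ≤ Real.cos w.arg) : |w.arg| ≤ ψ := by
  by_contra hlt
  push_neg at hlt
  have := Real.strictAntiOn_cos ⟨hψ0, hψπ⟩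
    ⟨abs_nonneg _, Complex.abs_arg_le_pi w⟩ hlt
  rw [Real.cos_abs] at this
  linarith

lemma jordan_arg {w : ℂ} (hw : w ≠ 0) (hre : 0 ≤ w.re) :
    |w.arg| ≤ π / 2 * (|w.im| / ‖w‖) := by
  have h1 : |w.arg| ≤ π / 2 := Complex.abs_arg_le_pi_div_two_iff.mpr hre
  have h2 := Real.mul_le_sin (abs_nonneg w.arg) h1
  have h3 : Real.sin |w.arg| = |w.im| / ‖w‖ := by
    rcases abs_cases w.arg with ⟨he, hag⟩ | ⟨he, hag⟩
    · rw [he, Complex.sin_arg, abs_of_nonneg (Complex.arg_nonneg_iff.mp hag)]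
    · rw [he, Real.sin_neg, Complex.sin_arg,
        abs_of_neg (Complex.arg_neg_iff.mp (by linarith)), neg_div]
  rw [h3] at h2
  have hπ : (0:ℝ) < π := Real.pi_pos
  calc |w.arg| = π / 2 * (2 / π * |w.arg|) := by field_simp
  _ ≤ π / 2 * (|w.im| / ‖w‖) := by
      apply mul_le_mul_of_nonneg_left h2 (by positivity)

lemma vre_lower (β c E r m₀ ψ : ℝ) (u : ℂ)
    (hβ : 0 < β) (hc : 0 ≤ c) (hE : 1 ≤ E) (hr : 0 < r) (hm0 : 0 < m₀)
    (hu : ‖u‖ = r)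
    (hure : u.re = r * Real.cos ψ) (huim : u.im = -(r * Real.sin ψ))
    (hψ0 : 0 < ψ) (hψπ : ψ ≤ π) (hβψ : β * ψ ≤ π) (hcos : Real.cos (β * ψ) ≤ 0)
    (hm : m₀ ≤ Real.sin ψ) :
    (m₀ * r) ^ (-β) * Real.cos (β * ψ) ≤ (((c : ℂ) + (E : ℂ) * u) ^ ((-β : ℝ) : ℂ)).re := by
  have hE0 : (0:ℝ) < E := lt_of_lt_of_le one_pos hE
  have hsinψ : 0 < Real.sin ψ := lt_of_lt_of_le hm0 hm
  have him : u.im < 0 := by rw [huim]; nlinarith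
  set B := (c : ℂ) + (E : ℂ) * u with hBdef
  have hBim : B.im = E * u.im := by simp [hBdef]
  have hBim0 : B.im < 0 := by rw [hBim]; exact mul_neg_of_pos_of_neg hE0 him
  have hB0 : B ≠ 0 := fun h => by rw [h] at hBim0; simp at hBim0
  have habsB : 0 < ‖B‖ := norm_pos_iff.mpr hB0
  have hBge : m₀ * r ≤ ‖B‖ := by
    have h1 : |B.im| ≤ ‖B‖ := Complex.abs_im_le_norm B
    have h2 : |B.im| = E * (r * Real.sin ψ) := by
      rw [hBim, huim, abs_of_neg (by nlinarith)]; ring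
    nlinarith
  have hdiv : u.re / r = Real.cos ψ := by rw [hure]; field_simp
  have hcosarg : Real.cos ψ ≤ Real.cos B.arg := by
    have := cos_arg_ge c E r u hc hE0 hr hu him
    rwa [hdiv] at this
  have hargle : |B.arg| ≤ ψ := abs_arg_le_of_cos_ge hψ0.le hψπ hcosarg
  have hre : (B ^ ((-β : ℝ) : ℂ)).re = ‖B‖ ^ (-β) * Real.cos (β * |B.arg|) := by
    rw [cpow_real_re B hB0 (-β)]
    congr 1
    rw [← Real.cos_abs (-β * B.arg), abs_mul, abs_neg, abs_of_pos hβ]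
  have hc1 : Real.cos (β * ψ) ≤ Real.cos (β * |B.arg|) :=
    Real.cos_le_cos_of_nonneg_of_le_pi (by positivity) hβψ
      (by nlinarith [abs_nonneg B.arg])
  have habsle : ‖B‖ ^ (-β) ≤ (m₀ * r) ^ (-β) :=
    Real.rpow_le_rpow_of_nonpos (by positivity) hBge (by linarith)
  rw [hre]
  calc (m₀ * r) ^ (-β) * Real.cos (β * ψ)
      ≤ ‖B‖ ^ (-β) * Real.cos (β * ψ) := mul_le_mul_of_nonpos_right habsle hcos
  _ ≤ ‖B‖ ^ (-β) * Real.cos (β * |B.arg|) :=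
      mul_le_mul_of_nonneg_left hc1 (by positivity)

lemma vre_good (α c E r : ℝ) (u : ℂ) (hα : 1 < α)
    (hE : 0 < E) (hr : 0 < r) (hu : ‖u‖ = r) (him : u.im < 0)
    (hc : (1 + 3 / (α - 1)) * (E * r) ≤ c) :
    1 / 2 * (c + E * r) ^ (-(α - 1)⁻¹)
      ≤ (((c : ℂ) + (E : ℂ) * u) ^ ((-(α - 1)⁻¹ : ℝ) : ℂ)).re := by
  set β := (α - 1)⁻¹ with hβdef
  have hα1 : 0 < α - 1 := by linarith
  have hβ : 0 < β := by positivity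
  have hc0 : 0 ≤ c := le_trans (by positivity) hc
  set B := (c : ℂ) + (E : ℂ) * u with hBdef
  have hBre : B.re = c + E * u.re := by simp [hBdef]
  have hureabs : |u.re| ≤ r := hu ▸ Complex.abs_re_le_norm u
  have hre1 : -r ≤ u.re := (abs_le.mp hureabs).1
  have hBrege : 3 / (α - 1) * (E * r) ≤ B.re := by
    rw [hBre]
    have h1 : E * (-r) ≤ E * u.re := mul_le_mul_of_nonneg_left hre1 hE.le
    nlinarith
  have hBre0 : 0 < B.re := lt_of_lt_of_le (by positivity) hBrege
  have hB0 : B ≠ 0 := fun h => by rw [h] at hBre0; simp at hBre0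
  have habsB : 0 < ‖B‖ := norm_pos_iff.mpr hB0
  have hBgeabs : 3 / (α - 1) * (E * r) ≤ ‖B‖ := le_trans hBrege (Complex.re_le_norm B)
  have hBimle : |B.im| ≤ E * r := by
    have h1 : B.im = E * u.im := by simp [hBdef]
    have h2 : |u.im| ≤ r := hu ▸ Complex.abs_im_le_norm u
    rw [h1, abs_mul, abs_of_pos hE]
    exact mul_le_mul_of_nonneg_left h2 hE.le
  have harg : |B.arg| ≤ π / 2 * (E * r / (3 / (α - 1) * (E * r))) := by
    refine le_trans (jordan_arg hB0 hBre0.le) ?_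
    refine mul_le_mul_of_nonneg_left ?_ (by positivity)
    exact div_le_div₀ (by positivity) hBimle (by positivity) hBgeabs
  have harg2 : |B.arg| ≤ π / 6 * (α - 1) := by
    have h : E * r / (3 / (α - 1) * (E * r)) = (α - 1) / 3 := by
      field_simp
    rw [h] at harg
    calc |B.arg| ≤ π / 2 * ((α - 1) / 3) := harg
    _ = π / 6 * (α - 1) := by ring
  have hβarg : β * |B.arg| ≤ π / 6 := by
    calc β * |B.arg| ≤ β * (π / 6 * (α - 1)) := mul_le_mul_of_nonneg_left harg2 hβ.le
    _ = π / 6 := by rw [hβdef]; field_simp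
  have hsqrt3 : (1:ℝ) ≤ Real.sqrt 3 := by
    rw [show (1:ℝ) = Real.sqrt 1 by simp]
    exact Real.sqrt_le_sqrt (by norm_num)
  have hcosge : 1 / 2 ≤ Real.cos (β * |B.arg|) := by
    have h1 : Real.cos (π / 6) ≤ Real.cos (β * |B.arg|) :=
      Real.cos_le_cos_of_nonneg_of_le_pi (by positivity)
        (by linarith [Real.pi_pos]) hβarg
    rw [Real.cos_pi_div_six] at h1
    linarith
  have hre : (B ^ ((-β : ℝ) : ℂ)).re = ‖B‖ ^ (-β) * Real.cos (β * |B.arg|) := by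
    rw [cpow_real_re B hB0 (-β)]
    congr 1
    rw [← Real.cos_abs (-β * B.arg), abs_mul, abs_neg, abs_of_pos hβ]
  have hBle : ‖B‖ ≤ c + E * r := by
    calc ‖B‖ ≤ ‖(c : ℂ)‖ + ‖((E : ℂ) * u)‖ := norm_add_le _ _
    _ = c + E * r := by rw [norm_mul]; simp [Complex.norm_real, abs_of_nonneg hc0, abs_of_pos hE, hu]
  have habsle : (c + E * r) ^ (-β) ≤ ‖B‖ ^ (-β) :=
    Real.rpow_le_rpow_of_nonpos habsB hBle (by linarith)
  rw [hre]
  calc 1 / 2 * (c + E * r) ^ (-β) ≤ 1 / 2 * ‖B‖ ^ (-β) := by linarith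
  _ ≤ ‖B‖ ^ (-β) * Real.cos (β * |B.arg|) := by
      rw [mul_comm]
      exact mul_le_mul_of_nonneg_left hcosge
        (Real.rpow_nonneg habsB.le _)

set_option maxHeartbeats 1000000 in
lemma Wre_bound (b α K θ t t' β N Λ E₁ m₀ C₄ ε₀ : ℝ)
    (hb : 0 < b) (hα : 1 < α) (hα2 : α < 2)
    (hβdef : β = (α - 1)⁻¹)
    (hNdef : N = 1 + 3 / (α - 1))
    (hE₁def : E₁ = Real.exp (b * (α - 1)))
    (hΛdef : Λ = α * N * E₁ / (α - 1))
    (hm₀def : m₀ = min (Real.sin ((α - 1) * (π / 2))) (Real.sqrt 2 / 2))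
    (hC₄def : C₄ = 2 * Λ * E₁ + E₁)
    (hε₀1 : 0 < ε₀) (hε₀2 : ε₀ ≤ π / 8) (hε₀3 : ε₀ ≤ C₄ ^ (-β) * m₀ ^ β / 4)
    (hK1 : 1 ≤ K) (ht : 0 < t) (ht'def : t' = min t 1)
    (hK2 : K ^ (1 - α) ≤ t' / (2 * Λ))
    (hK3 : K ^ (1 - α) ≤ (1 - (Real.exp (b * (α - 1) * t'))⁻¹) / (α * b * N))
    (hθ1 : π / 2 < θ) (hθ2 : θ ≤ π / 2 + ε₀) :
    Λ * C₄ ^ (-β) / 4 * K ^ (2 - α)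
      ≤ (∫ s in (0:ℝ)..t, vC b α s ((K : ℂ) * Complex.exp ((θ : ℂ) * Complex.I))).re := by
  have hπ : (0:ℝ) < π := Real.pi_pos
  have hα0 : (0:ℝ) < α := by linarith
  have hα1 : (0:ℝ) < α - 1 := by linarith
  have hβ : 0 < β := by rw [hβdef]; positivity
  have hE₁1 : 1 ≤ E₁ := by rw [hE₁def]; exact Real.one_le_exp (by positivity)
  have hE₁0 : 0 < E₁ := lt_of_lt_of_le one_pos hE₁1
  have hN : 0 < N := by rw [hNdef]; positivity
  have hΛ : 0 < Λ := by rw [hΛdef]; positivity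
  have hC₄ : 0 < C₄ := by rw [hC₄def]; positivity
  have hm₀ : 0 < m₀ := by
    rw [hm₀def]
    apply lt_min
    · refine Real.sin_pos_of_pos_of_lt_pi (by positivity) ?_
      have hh : (α - 1) * (π / 2) < 1 * (π / 2) :=
        mul_lt_mul_of_pos_right (by linarith) (by positivity)
      linarith
    · positivity
  have ht'0 : 0 < t' := by rw [ht'def]; exact lt_min ht one_pos
  have ht'1 : t' ≤ 1 := by rw [ht'def]; exact min_le_right _ _
  have ht't : t' ≤ t := by rw [ht'def]; exact min_le_left _ _
  have hK0 : (0:ℝ) < K := lt_of_lt_of_le one_pos hK1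
  set r : ℝ := K ^ (1 - α) with hrdef
  have hr : 0 < r := Real.rpow_pos_of_pos hK0 _
  have hrβ : r ^ (-β) = K := by
    rw [hrdef, ← Real.rpow_mul hK0.le,
      show (1 - α) * (-β) = 1 from by rw [hβdef]; field_simp; ring, Real.rpow_one]
  have hrK : r * K = K ^ (2 - α) := by
    rw [hrdef]
    calc K ^ (1 - α) * K = K ^ (1 - α) * K ^ (1:ℝ) := by rw [Real.rpow_one]
    _ = K ^ (1 - α + 1) := (Real.rpow_add hK0 _ _).symm
    _ = K ^ (2 - α) := by congr 1; ring
  have h2Λr : 2 * Λ * r ≤ t' := by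
    calc 2 * Λ * r ≤ 2 * Λ * (t' / (2 * Λ)) :=
          mul_le_mul_of_nonneg_left hK2 (by positivity)
    _ = t' := by field_simp
  -- geometry of z and u
  set z : ℂ := (K:ℂ) * Complex.exp ((θ:ℂ) * Complex.I) with hzdef
  have hθπ : θ ≤ 5 * π / 8 := by linarith
  have hθ0 : 0 < θ := by linarith
  set ψ : ℝ := (α - 1) * θ with hψdef
  have hψ0 : 0 < ψ := by positivity
  have hψθ : ψ < θ := by
    rw [hψdef]; exact mul_lt_of_lt_one_left hθ0 (by linarith)
  have hψπ : ψ < π := lt_of_lt_of_le hψθ (by linarith)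
  have hβψ : β * ψ = θ := by rw [hψdef, hβdef]; field_simp
  have hz1 : z = Complex.exp ((Real.log K : ℂ) + (θ:ℂ) * Complex.I) := by
    rw [Complex.exp_add, ← Complex.ofReal_exp, Real.exp_log hK0]
  have hz0 : z ≠ 0 := by rw [hz1]; exact Complex.exp_ne_zero _
  have him0 : ((Real.log K : ℂ) + (θ:ℂ) * Complex.I).im = θ := by simp
  have hlogz : Complex.log z = (Real.log K : ℂ) + (θ:ℂ) * Complex.I := by
    rw [hz1, Complex.log_exp (by rw [him0]; linarith) (by rw [him0]; linarith)]
  set u : ℂ := z ^ ((1:ℂ) - (α:ℂ)) with hudef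
  set ξ : ℂ := ((Real.log K : ℂ) + (θ:ℂ) * Complex.I) * ((1:ℂ) - (α:ℂ)) with hξdef
  have hu : u = Complex.exp ξ := by
    rw [hudef, Complex.cpow_def_of_ne_zero hz0, hlogz]
  have hξre : ξ.re = Real.log K * (1 - α) := by
    simp [hξdef, Complex.mul_re]
  have hξim : ξ.im = θ * (1 - α) := by
    simp [hξdef, Complex.mul_im]; try ring
  have hrexp : Real.exp ξ.re = r := by
    rw [hξre, hrdef, Real.rpow_def_of_pos hK0]
  have habs_u : ‖u‖ = r := by rw [hu, Complex.norm_exp, hrexp]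
  have hmψ : θ * (1 - α) = -ψ := by rw [hψdef]; ring
  have hure : u.re = r * Real.cos ψ := by
    rw [hu, Complex.exp_re, hrexp, hξim, hmψ, Real.cos_neg]
  have huim : u.im = -(r * Real.sin ψ) := by
    rw [hu, Complex.exp_im, hrexp, hξim, hmψ, Real.sin_neg]; ring
  have hsinψ : 0 < Real.sin ψ := Real.sin_pos_of_pos_of_lt_pi hψ0 hψπ
  have him_u : u.im < 0 := by rw [huim]; exact neg_lt_zero.mpr (mul_pos hr hsinψ)
  have hm : m₀ ≤ Real.sin ψ := by
    rcases le_or_gt ψ (π/2) with h | h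
    · refine le_trans (hm₀def ▸ min_le_left _ _) ?_
      refine Real.sin_le_sin_of_le_of_le_pi_div_two
        (le_trans (by linarith) (by positivity : (0:ℝ) ≤ (α - 1) * (π / 2))) h ?_
      rw [hψdef]; exact mul_le_mul_of_nonneg_left hθ1.le hα1.le
    · refine le_trans (hm₀def ▸ min_le_right _ _) ?_
      rw [← Real.cos_pi_div_four, ← Real.cos_sub_pi_div_two ψ]
      exact Real.cos_le_cos_of_nonneg_of_le_pi (by linarith) (by linarith) (by linarith)
  -- the functions E and c
  set Ef : ℝ → ℝ := fun s => Real.exp (b * (α - 1) * s) with hEf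
  set cf : ℝ → ℝ := fun s => (Ef s - 1) / (α * b) with hcf
  have hEf0 : ∀ s : ℝ, 0 < Ef s := fun s => Real.exp_pos _
  have hEf1 : ∀ s : ℝ, 0 ≤ s → 1 ≤ Ef s := fun s hs => Real.one_le_exp (by positivity)
  have hcf0 : ∀ s : ℝ, 0 ≤ s → 0 ≤ cf s := by
    intro s hs
    have := hEf1 s hs
    rw [hcf]
    exact div_nonneg (by linarith) (by positivity)
  have hvC : ∀ s : ℝ, vC b α s z = (((cf s : ℝ):ℂ) + ((Ef s : ℝ):ℂ) * u) ^ ((-β : ℝ):ℂ) := by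
    intro s
    have h1 : ((α:ℂ)) ≠ 0 := by exact_mod_cast hα0.ne'
    have h2 : ((b:ℂ)) ≠ 0 := by exact_mod_cast hb.ne'
    have h3 : ((α:ℂ)) - 1 ≠ 0 := by
      rw [sub_ne_zero]; exact_mod_cast hα.ne'
    have hexp : ((1:ℂ)/(1 - (α:ℂ))) = ((-β : ℝ):ℂ) := by
      rw [hβdef]
      push_cast
      rw [show (1:ℂ) - (α:ℂ) = -((α:ℂ) - 1) from by ring, one_div, inv_neg]
    unfold vC
    rw [hexp, ← hudef]
    congr 1
    rw [← Complex.ofReal_exp, hcf]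
    push_cast
    field_simp [hEf]
    simp only [hEf]; push_cast; ring_nf
  have hbase : Continuous fun s => ((cf s : ℝ):ℂ) + ((Ef s : ℝ):ℂ) * u := by
    have hEfc : Continuous Ef := Real.continuous_exp.comp (continuous_const.mul continuous_id)
    have hcfc : Continuous cf := (hEfc.sub continuous_const).div_const _
    exact (Complex.continuous_ofReal.comp hcfc).add
      ((Complex.continuous_ofReal.comp hEfc).mul continuous_const)
  have hbase_im : ∀ s : ℝ, (((cf s : ℝ):ℂ) + ((Ef s : ℝ):ℂ) * u).im < 0 := by
    intro s
    have h : (((cf s : ℝ):ℂ) + ((Ef s : ℝ):ℂ) * u).im = Ef s * u.im := by simp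
    rw [h]
    exact mul_neg_of_pos_of_neg (hEf0 s) him_u
  have hcont : Continuous fun s => vC b α s z := by
    rw [funext hvC]
    refine continuous_iff_continuousAt.mpr fun s => ?_
    exact hbase.continuousAt.cpow continuousAt_const (Or.inr (ne_of_lt (hbase_im s)))
  have hcontre : Continuous fun s => (vC b α s z).re := Complex.continuous_re.comp hcont
  have hInt : ∀ p q : ℝ, IntervalIntegrable (fun s => vC b α s z) MeasureTheory.volume p q :=
    fun p q => hcont.intervalIntegrable p q
  have hIntRe : ∀ p q : ℝ,
      IntervalIntegrable (fun s => (vC b α s z).re) MeasureTheory.volume p q :=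
    fun p q => hcontre.intervalIntegrable p q
  have hWre : (∫ s in (0:ℝ)..t, vC b α s z).re = ∫ s in (0:ℝ)..t, (vC b α s z).re := by
    have h := Complex.reCLM.intervalIntegral_comp_comm (hInt 0 t)
    simp only [Complex.reCLM_apply] at h
    rw [← h]
  -- pointwise bounds
  have hmK : (m₀ * r) ^ (-β) = m₀ ^ (-β) * K := by
    rw [Real.mul_rpow hm₀.le hr.le, hrβ]
  have hcosθ : Real.cos θ ≤ 0 :=
    Real.cos_nonpos_of_pi_div_two_le_of_le hθ1.le (by linarith)
  have hB1 : ∀ s ∈ Set.Icc (0:ℝ) (Λ * r),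
      -(m₀ ^ (-β) * K * Real.sin ε₀) ≤ (vC b α s z).re := by
    intro s hs
    rw [hvC s]
    have hlow := vre_lower β (cf s) (Ef s) r m₀ ψ u hβ (hcf0 s hs.1) (hEf1 s hs.1) hr hm₀
      habs_u hure huim hψ0 hψπ.le (by rw [hβψ]; linarith) (by rw [hβψ]; exact hcosθ) hm
    refine le_trans ?_ hlow
    rw [hmK, hβψ]
    have hcosε : -Real.sin ε₀ ≤ Real.cos θ := by
      have h1 : Real.cos (π/2 + ε₀) ≤ Real.cos θ :=
        Real.cos_le_cos_of_nonneg_of_le_pi (by linarith) (by linarith) hθ2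
      rw [add_comm, Real.cos_add_pi_div_two] at h1
      exact h1
    have hpos : 0 < m₀ ^ (-β) * K := by
      have := Real.rpow_pos_of_pos hm₀ (-β)
      positivity
    calc -(m₀ ^ (-β) * K * Real.sin ε₀) = m₀ ^ (-β) * K * (-Real.sin ε₀) := by ring
    _ ≤ m₀ ^ (-β) * K * Real.cos θ := mul_le_mul_of_nonneg_left hcosε hpos.le
  have hgoodc : ∀ s : ℝ, Λ * r ≤ s → s ≤ t → (1 + 3 / (α - 1)) * (Ef s * r) ≤ cf s := by
    intro s hs1 hs2
    have hs0 : 0 ≤ s := le_trans (by positivity) hs1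
    rw [← hNdef]
    rcases le_or_gt s t' with hst' | hst'
    · have hEfle : Ef s ≤ E₁ := by
        rw [hEf, hE₁def]
        refine Real.exp_le_exp.mpr ?_
        have h0 : s ≤ 1 := le_trans hst' ht'1
        calc b * (α - 1) * s ≤ b * (α - 1) * 1 :=
              mul_le_mul_of_nonneg_left h0 (by positivity)
        _ = b * (α - 1) := mul_one _
      have h1 : b * (α - 1) * s + 1 ≤ Ef s := by
        have h := Real.add_one_le_exp (b * (α - 1) * s)
        rw [hEf]; linarith
      have h2 : (α - 1) * s / α ≤ cf s := by
        rw [hcf, div_le_div_iff₀ hα0 (by positivity)]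
        have h5 : b * (α - 1) * s ≤ Ef s - 1 := by linarith
        calc (α - 1) * s * (α * b) = α * (b * (α - 1) * s) := by ring
        _ ≤ α * (Ef s - 1) := mul_le_mul_of_nonneg_left h5 hα0.le
        _ = (Ef s - 1) * α := by ring
      have h3 : N * E₁ * r = (α - 1) * (Λ * r) / α := by
        rw [hΛdef]; field_simp
      calc N * (Ef s * r) ≤ N * (E₁ * r) :=
            mul_le_mul_of_nonneg_left (mul_le_mul_of_nonneg_right hEfle hr.le) hN.le
      _ = N * E₁ * r := by ring
      _ = (α - 1) * (Λ * r) / α := h3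
      _ ≤ (α - 1) * s / α := by gcongr
      _ ≤ cf s := h2
    · set Ets : ℝ := Real.exp (b * (α - 1) * t') with hEtsdef
      have hEts0 : 0 < Ets := Real.exp_pos _
      have hEt's : Ets ≤ Ef s := by
        rw [hEf, hEtsdef]
        refine Real.exp_le_exp.mpr ?_
        exact mul_le_mul_of_nonneg_left hst'.le (by positivity)
      have h1 : Ef s * (1 - Ets⁻¹) ≤ Ef s - 1 := by
        have h2 : 1 ≤ Ef s * Ets⁻¹ := by
          rw [← div_eq_mul_inv, le_div_iff₀ hEts0, one_mul]; exact hEt's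
        have h2' : Ef s * (1 - Ets⁻¹) = Ef s - Ef s * Ets⁻¹ := by ring
        linarith
      have h4 : r * (α * b * N) ≤ 1 - Ets⁻¹ := by
        calc r * (α * b * N) ≤ (1 - Ets⁻¹) / (α * b * N) * (α * b * N) :=
              mul_le_mul_of_nonneg_right hK3 (by positivity)
        _ = 1 - Ets⁻¹ := by field_simp
      have h3 : N * (Ef s * r) * (α * b) ≤ Ef s * (1 - Ets⁻¹) := by
        calc N * (Ef s * r) * (α * b) = Ef s * (r * (α * b * N)) := by ring
        _ ≤ Ef s * (1 - Ets⁻¹) := mul_le_mul_of_nonneg_left h4 (hEf0 s).le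
      rw [hcf, le_div_iff₀ (by positivity)]
      linarith
  have hC₄r : ∀ s ∈ Set.Icc (Λ * r) (2 * Λ * r), cf s + Ef s * r ≤ C₄ * r := by
    intro s hs
    have hs0 : 0 ≤ s := le_trans (by positivity) hs.1
    have hst' : s ≤ t' := le_trans hs.2 h2Λr
    have hEfle : Ef s ≤ E₁ := by
      rw [hEf, hE₁def]
      refine Real.exp_le_exp.mpr ?_
      have h0 : s ≤ 1 := le_trans hst' ht'1
      calc b * (α - 1) * s ≤ b * (α - 1) * 1 :=
            mul_le_mul_of_nonneg_left h0 (by positivity)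
      _ = b * (α - 1) := mul_one _
    have h1 : Ef s - 1 ≤ b * (α - 1) * s * Ef s := by
      have h2 := Real.add_one_le_exp (-(b * (α - 1) * s))
      rw [Real.exp_neg] at h2
      have h3 := mul_le_mul_of_nonneg_left h2 (hEf0 s).le
      rw [mul_inv_cancel₀ (hEf0 s).ne'] at h3
      rw [hEf] at h3 ⊢
      have h5 : rexp (b * (α - 1) * s) * (-(b * (α - 1) * s) + 1)
          = rexp (b * (α - 1) * s) - b * (α - 1) * s * rexp (b * (α - 1) * s) := by ring
      linarith
    have hcfle : cf s ≤ 2 * Λ * r * E₁ := by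
      rw [hcf, div_le_iff₀ (by positivity)]
      have h4 : b * (α - 1) * s * Ef s ≤ b * (α - 1) * (2 * Λ * r) * E₁ := by
        have hb1 : b * (α - 1) * s ≤ b * (α - 1) * (2 * Λ * r) :=
          mul_le_mul_of_nonneg_left hs.2 (by positivity)
        exact mul_le_mul hb1 hEfle (hEf0 s).le (by positivity)
      have h6 : b * (α - 1) * (2 * Λ * r) * E₁ ≤ 2 * Λ * r * E₁ * (α * b) := by
        have h7 : (2 * Λ * r * E₁ * b) * (α - 1) ≤ (2 * Λ * r * E₁ * b) * α :=
          mul_le_mul_of_nonneg_left (by linarith) (by positivity)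
        linarith
      linarith
    have h5 : Ef s * r ≤ E₁ * r := mul_le_mul_of_nonneg_right hEfle hr.le
    rw [hC₄def]; linarith
  have hB2 : ∀ s ∈ Set.Icc (Λ * r) (2 * Λ * r), C₄ ^ (-β) * K / 2 ≤ (vC b α s z).re := by
    intro s hs
    rw [hvC s]
    have hs0 : 0 ≤ s := le_trans (by positivity) hs.1
    have hst : s ≤ t := le_trans (le_trans hs.2 h2Λr) ht't
    have hgood := hgoodc s hs.1 hst
    have hkey := vre_good α (cf s) (Ef s) r u hα (hEf0 s) hr habs_u him_u hgood
    rw [← hβdef] at hkey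
    refine le_trans ?_ hkey
    have hcpos : 0 < cf s + Ef s * r :=
      add_pos_of_nonneg_of_pos (hcf0 s hs0) (mul_pos (hEf0 s) hr)
    have h5 : (C₄ * r) ^ (-β) ≤ (cf s + Ef s * r) ^ (-β) :=
      Real.rpow_le_rpow_of_nonpos hcpos (hC₄r s hs) (by linarith)
    have h6 : (C₄ * r) ^ (-β) = C₄ ^ (-β) * K := by rw [Real.mul_rpow hC₄.le hr.le, hrβ]
    calc C₄ ^ (-β) * K / 2 = 1 / 2 * (C₄ * r) ^ (-β) := by rw [h6]; ring
    _ ≤ 1 / 2 * (cf s + Ef s * r) ^ (-β) := by linarith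
  have hB3 : ∀ s ∈ Set.Icc (2 * Λ * r) t, 0 ≤ (vC b α s z).re := by
    intro s hs
    rw [hvC s]
    have hΛrs : Λ * r ≤ s := le_trans (by linarith [mul_pos hΛ hr]) hs.1
    have hgood := hgoodc s hΛrs hs.2
    have hkey := vre_good α (cf s) (Ef s) r u hα (hEf0 s) hr habs_u him_u hgood
    rw [← hβdef] at hkey
    refine le_trans ?_ hkey
    have hs0 : 0 ≤ s := le_trans (by positivity) hΛrs
    have hcpos : 0 < cf s + Ef s * r :=
      add_pos_of_nonneg_of_pos (hcf0 s hs0) (mul_pos (hEf0 s) hr)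
    positivity
  -- integral assembly
  have hΛr2 : Λ * r ≤ 2 * Λ * r := by linarith [mul_pos hΛ hr]
  have h0Λ : (0:ℝ) ≤ Λ * r := by positivity
  have h2Λt : 2 * Λ * r ≤ t := le_trans h2Λr ht't
  have e1 : (∫ s in (Λ*r)..(2*Λ*r), (vC b α s z).re) + (∫ s in (2*Λ*r)..t, (vC b α s z).re)
      = ∫ s in (Λ*r)..t, (vC b α s z).re :=
    intervalIntegral.integral_add_adjacent_intervals (hIntRe _ _) (hIntRe _ _)
  have e2 : (∫ s in (0:ℝ)..(Λ*r), (vC b α s z).re) + (∫ s in (Λ*r)..t, (vC b α s z).re)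
      = ∫ s in (0:ℝ)..t, (vC b α s z).re :=
    intervalIntegral.integral_add_adjacent_intervals (hIntRe _ _) (hIntRe _ _)
  have hA : Λ * r * -(m₀ ^ (-β) * K * Real.sin ε₀) ≤ ∫ s in (0:ℝ)..(Λ*r), (vC b α s z).re := by
    have h := intervalIntegral.integral_mono_on h0Λ intervalIntegrable_const (hIntRe 0 (Λ*r)) hB1
    rwa [intervalIntegral.integral_const, sub_zero, smul_eq_mul] at h
  have hBB : Λ * r * (C₄ ^ (-β) * K / 2) ≤ ∫ s in (Λ*r)..(2*Λ*r), (vC b α s z).re := by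
    have h := intervalIntegral.integral_mono_on hΛr2 intervalIntegrable_const (hIntRe _ _) hB2
    rw [intervalIntegral.integral_const, smul_eq_mul] at h
    calc Λ * r * (C₄ ^ (-β) * K / 2) = (2*Λ*r - Λ*r) * (C₄ ^ (-β) * K / 2) := by ring
    _ ≤ _ := h
  have hC : 0 ≤ ∫ s in (2*Λ*r)..t, (vC b α s z).re :=
    intervalIntegral.integral_nonneg h2Λt hB3
  have hsum : Λ * r * (C₄ ^ (-β) * K / 2) - Λ * r * (m₀ ^ (-β) * K * Real.sin ε₀)
      ≤ ∫ s in (0:ℝ)..t, (vC b α s z).re := by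
    rw [← e2, ← e1]
    linarith
  have hsin : m₀ ^ (-β) * Real.sin ε₀ ≤ C₄ ^ (-β) / 4 := by
    have h2 : Real.sin ε₀ ≤ C₄ ^ (-β) * m₀ ^ β / 4 := le_trans (Real.sin_lt hε₀1).le hε₀3
    have h3 : m₀ ^ (-β) * Real.sin ε₀ ≤ m₀ ^ (-β) * (C₄ ^ (-β) * m₀ ^ β / 4) :=
      mul_le_mul_of_nonneg_left h2 (Real.rpow_nonneg hm₀.le _)
    have hmβ : (0:ℝ) < m₀ ^ β := Real.rpow_pos_of_pos hm₀ β
    have h4 : m₀ ^ (-β) * (C₄ ^ (-β) * m₀ ^ β / 4) = C₄ ^ (-β) / 4 := by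
      rw [Real.rpow_neg hm₀.le]
      field_simp
    linarith
  rw [hWre, ← hrK]
  refine le_trans ?_ hsum
  have hsinnn : 0 ≤ Real.sin ε₀ := Real.sin_nonneg_of_nonneg_of_le_pi hε₀1.le (by linarith)
  have hΛrK : (0:ℝ) ≤ Λ * r * K := by positivity
  linarith [mul_le_mul_of_nonneg_left hsin hΛrK]

end Stmt10Aux

open Stmt10Aux in
theorem stmt_10 (a b α : ℝ) (ha : 0 < a) (hb : 0 < b) (hα : 1 < α) (hα2 : α < 2) :
    ∃ ε₀ : ℝ, 0 < ε₀ ∧ ε₀ < π / 2 ∧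
      ∀ x t : ℝ, 0 < x → 0 < t →
        Tendsto (fun K : ℝ =>
            ∫ θ in (π / 2)..(π / 2 + ε₀),
              Complex.I * (K : ℂ) * Complex.exp ((θ : ℂ) * Complex.I) *
                Complex.exp ((x : ℂ) * ((K : ℂ) * Complex.exp ((θ : ℂ) * Complex.I))) *
                Complex.exp (-(a : ℂ) *
                  ∫ s in (0:ℝ)..t, vC b α s ((K : ℂ) * Complex.exp ((θ : ℂ) * Complex.I))))
          atTop (nhds 0) := by
  have hπ : (0:ℝ) < π := Real.pi_pos
  have hα0 : (0:ℝ) < α := by linarith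
  have hα1 : (0:ℝ) < α - 1 := by linarith
  have hδ : (0:ℝ) < 2 - α := by linarith
  set β : ℝ := (α - 1)⁻¹ with hβdef
  have hβ : 0 < β := by positivity
  set E₁ : ℝ := Real.exp (b * (α - 1)) with hE₁def
  have hE₁ : 1 ≤ E₁ := Real.one_le_exp (by positivity)
  have hE₁0 : 0 < E₁ := lt_of_lt_of_le one_pos hE₁
  set N : ℝ := 1 + 3 / (α - 1) with hNdef
  have hN : 0 < N := by positivity
  set Λ : ℝ := α * N * E₁ / (α - 1) with hΛdef
  have hΛ : 0 < Λ := by positivity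
  set m₀ : ℝ := min (Real.sin ((α - 1) * (π / 2))) (Real.sqrt 2 / 2) with hm₀def
  have hm₀ : 0 < m₀ := by
    apply lt_min
    · refine Real.sin_pos_of_pos_of_lt_pi (by positivity) ?_
      have hh : (α - 1) * (π / 2) < 1 * (π / 2) :=
        mul_lt_mul_of_pos_right (by linarith) (by positivity)
      linarith
    · positivity
  set C₄ : ℝ := 2 * Λ * E₁ + E₁ with hC₄def
  have hC₄ : 0 < C₄ := by positivity
  set c₀ : ℝ := Λ * C₄ ^ (-β) / 4 with hc₀def
  have hC₄β : 0 < C₄ ^ (-β) := Real.rpow_pos_of_pos hC₄ (-β)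
  have hc₀ : 0 < c₀ := by rw [hc₀def]; positivity
  set ε₀ : ℝ := min (π / 8) (C₄ ^ (-β) * m₀ ^ β / 4) with hε₀def
  have hm₀β : 0 < m₀ ^ β := Real.rpow_pos_of_pos hm₀ β
  have hε₀ : 0 < ε₀ := lt_min (by positivity) (by positivity)
  have hεle : ε₀ ≤ π / 8 := min_le_left _ _
  have hεle2 : ε₀ ≤ C₄ ^ (-β) * m₀ ^ β / 4 := min_le_right _ _
  refine ⟨ε₀, hε₀, by linarith, ?_⟩
  intro x t hx ht
  rw [tendsto_zero_iff_norm_tendsto_zero]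
  set t' : ℝ := min t 1 with ht'def
  have ht'0 : 0 < t' := lt_min ht one_pos
  set Et' : ℝ := Real.exp (b * (α - 1) * t') with hEt'def
  have hEt'1 : 1 < Et' := by
    rw [hEt'def]; exact Real.one_lt_exp_iff.mpr (by positivity)
  have hEt'inv : Et'⁻¹ < 1 := inv_lt_one_of_one_lt₀ hEt'1
  have hr₁ : 0 < (1 - Et'⁻¹) / (α * b * N) := div_pos (by linarith) (by positivity)
  have hevr : Tendsto (fun K : ℝ => K ^ (1 - α)) atTop (nhds 0) := by
    have h := tendsto_rpow_neg_atTop hα1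
    simpa [show -(α - 1) = 1 - α from by ring] using h
  have hev2 : ∀ᶠ K : ℝ in atTop, K ^ (1 - α) ≤ t' / (2 * Λ) :=
    hevr.eventually (eventually_le_nhds (by positivity))
  have hev3 : ∀ᶠ K : ℝ in atTop, K ^ (1 - α) ≤ (1 - Et'⁻¹) / (α * b * N) :=
    hevr.eventually (eventually_le_nhds hr₁)
  have hglim : Tendsto (fun K : ℝ => ε₀ * Real.exp (Real.log K - a * c₀ * K ^ (2 - α)))
      atTop (nhds 0) := by
    have hbot : Tendsto (fun K : ℝ => -(a * c₀ / 2) * K ^ (2 - α)) atTop atBot :=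
      Tendsto.const_mul_atTop_of_neg (neg_lt_zero.mpr (by positivity)) (tendsto_rpow_atTop hδ)
    have hlo := (isLittleO_log_rpow_atTop hδ).bound (show (0:ℝ) < a * c₀ / 2 by positivity)
    have hmono : ∀ᶠ K : ℝ in atTop,
        Real.log K - a * c₀ * K ^ (2 - α) ≤ -(a * c₀ / 2) * K ^ (2 - α) := by
      filter_upwards [hlo, eventually_ge_atTop (1:ℝ)] with K hK h1K
      have hKnn : (0:ℝ) ≤ K ^ (2 - α) := Real.rpow_nonneg (by linarith) _
      rw [Real.norm_eq_abs, Real.norm_eq_abs] at hK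
      have hlog : Real.log K ≤ a * c₀ / 2 * K ^ (2 - α) := by
        calc Real.log K ≤ |Real.log K| := le_abs_self _
        _ ≤ a * c₀ / 2 * |K ^ (2 - α)| := hK
        _ = a * c₀ / 2 * K ^ (2 - α) := by rw [abs_of_nonneg hKnn]
      linarith
    have h2 : Tendsto (fun K : ℝ => Real.log K - a * c₀ * K ^ (2 - α)) atTop atBot :=
      tendsto_atBot_mono' atTop hmono hbot
    have h3 := (Real.tendsto_exp_atBot.comp h2).const_mul ε₀
    simpa using h3
  apply squeeze_zero' (Eventually.of_forall fun K => norm_nonneg _) ?_ hglim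
  filter_upwards [eventually_ge_atTop (1:ℝ), hev2, hev3] with K hK1 hK2 hK3
  have hK0 : (0:ℝ) < K := lt_of_lt_of_le one_pos hK1
  set Cb : ℝ := Real.exp (Real.log K - a * c₀ * K ^ (2 - α)) with hCbdef
  have key : ∀ θ ∈ Set.uIoc (π/2) (π/2 + ε₀),
      ‖Complex.I * (K : ℂ) * Complex.exp ((θ : ℂ) * Complex.I) *
        Complex.exp ((x : ℂ) * ((K : ℂ) * Complex.exp ((θ : ℂ) * Complex.I))) *
        Complex.exp (-(a : ℂ) *
          ∫ s in (0:ℝ)..t, vC b α s ((K : ℂ) * Complex.exp ((θ : ℂ) * Complex.I)))‖ ≤ Cb := by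
    intro θ hθ
    rw [Set.uIoc_of_le (by linarith)] at hθ
    obtain ⟨hθ1, hθ2⟩ := hθ
    have hWre := Wre_bound b α K θ t t' β N Λ E₁ m₀ C₄ ε₀ hb hα hα2 hβdef hNdef hE₁def hΛdef
      hm₀def hC₄def hε₀ hεle hεle2 hK1 ht ht'def hK2 (by rw [← hEt'def]; exact hK3) hθ1 hθ2
    set z : ℂ := (K:ℂ) * Complex.exp ((θ:ℂ) * Complex.I) with hzdef
    set W : ℂ := ∫ s in (0:ℝ)..t, vC b α s z with hWdef
    have hzre : z.re = K * Real.cos θ := by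
      rw [hzdef]
      simp [Complex.mul_re, Complex.exp_ofReal_mul_I_re, Complex.exp_ofReal_mul_I_im]
    have hnorm : ‖Complex.I * (K : ℂ) * Complex.exp ((θ:ℂ) * Complex.I) *
        Complex.exp ((x:ℂ) * z) * Complex.exp (-(a:ℂ) * W)‖
        = K * (Real.exp (x * (K * Real.cos θ)) * Real.exp (-(a * W.re))) := by
      rw [norm_mul, norm_mul, norm_mul, norm_mul]
      rw [Complex.norm_I, Complex.norm_real, Real.norm_eq_abs, Complex.norm_exp, Complex.norm_exp, Complex.norm_exp]
      have h1 : ((θ:ℂ) * Complex.I).re = 0 := by simp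
      have h2 : ((x:ℂ) * z).re = x * (K * Real.cos θ) := by
        rw [show ((x:ℂ) * z).re = x * z.re from by simp [Complex.mul_re], hzre]
      have h3 : (-(a:ℂ) * W).re = -(a * W.re) := by simp [Complex.mul_re]
      rw [h1, h2, h3, Real.exp_zero, abs_of_pos hK0]
      ring
    rw [hnorm]
    have hcosθ : Real.cos θ ≤ 0 :=
      Real.cos_nonpos_of_pi_div_two_le_of_le hθ1.le (by linarith)
    have hexp1 : Real.exp (x * (K * Real.cos θ)) ≤ 1 := by
      apply Real.exp_le_one_iff.mpr
      have : K * Real.cos θ ≤ 0 := mul_nonpos_of_nonneg_of_nonpos hK0.le hcosθ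
      exact mul_nonpos_of_nonneg_of_nonpos hx.le this
    have hexp2 : Real.exp (-(a * W.re)) ≤ Real.exp (-(a * (c₀ * K ^ (2 - α)))) := by
      apply Real.exp_le_exp.mpr
      have h5 : c₀ * K ^ (2 - α) ≤ W.re := by
        rw [hc₀def]
        calc Λ * C₄ ^ (-β) / 4 * K ^ (2 - α) ≤ (∫ s in (0:ℝ)..t, vC b α s z).re := hWre
        _ = W.re := by rw [hWdef]
      have h6 := mul_le_mul_of_nonneg_left h5 ha.le
      linarith
    calc K * (Real.exp (x * (K * Real.cos θ)) * Real.exp (-(a * W.re)))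
        ≤ K * (1 * Real.exp (-(a * (c₀ * K ^ (2 - α))))) := by
          apply mul_le_mul_of_nonneg_left ?_ hK0.le
          exact mul_le_mul hexp1 hexp2 (Real.exp_pos _).le one_pos.le
    _ = Real.exp (Real.log K) * Real.exp (-(a * (c₀ * K ^ (2 - α)))) := by
          rw [Real.exp_log hK0]; ring
    _ = Cb := by
          rw [hCbdef, ← Real.exp_add]
          congr 1
          ring
  calc ‖∫ θ in (π/2)..(π/2 + ε₀),
        Complex.I * (K : ℂ) * Complex.exp ((θ : ℂ) * Complex.I) *
          Complex.exp ((x : ℂ) * ((K : ℂ) * Complex.exp ((θ : ℂ) * Complex.I))) *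
          Complex.exp (-(a : ℂ) *
            ∫ s in (0:ℝ)..t, vC b α s ((K : ℂ) * Complex.exp ((θ : ℂ) * Complex.I)))‖
      ≤ Cb * |(π/2 + ε₀) - π/2| := intervalIntegral.norm_integral_le_of_norm_le_const key
  _ = ε₀ * Cb := by
      rw [show (π/2 + ε₀) - π/2 = ε₀ from by ring, abs_of_pos hε₀]
      ring
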